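/- Suppose V_gᵀBC⁻¹ = 0 and the spectral norm bound ‖(Ã − d₁I)† (BC⁻¹)‖₂ ≤ 1 holds, where Ã has its r smallest eigenvalues all equal to d₁. Then for any U ∈ ℝʳˣʳ satisfying UᵀU = I − C⁻¹Bᵀ((Ã−d₁I)†)ᵀ(Ã−d₁I)†BC⁻¹, the matrix X = V_gU + (Ã−d₁I)†BC⁻¹ lies in St(n,r) and satisfies the first-order condition ÃXC − B = XΛ with Λ = d₁C. -/
import Mathlib


open Matrix

/-- in the degenerate case `V_gᵀBC⁻¹ = 0` with the spectral-norm bound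
`‖(Ã−d₁I)†(BC⁻¹)‖₂ ≤ 1` (here `G` denotes the Moore–Penrose pseudoinverse of `Ã−d₁I`,
characterized by the four Penrose conditions), any `U` with
`UᵀU = I − C⁻¹Bᵀ(G)ᵀG BC⁻¹` yields `X = V_gU + G BC⁻¹ ∈ St(n,r)` satisfying the
first-order condition `ÃXC − B = XΛ` with `Λ = d₁C`. -/
theorem stmt18 {n r : ℕ}
    (Atil : Matrix (Fin n) (Fin n) ℝ) (hAtil : Atil.IsSymm)
    (d1 : ℝ)
    (Vg : Matrix (Fin n) (Fin r) ℝ) (hVg : Vgᵀ * Vg = 1)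
    (hEig : Atil * Vg = d1 • Vg)
    (hMin : (Atil - d1 • (1 : Matrix (Fin n) (Fin n) ℝ)).PosSemidef)
    (hSpan : ∀ v : Fin n → ℝ, Atil.mulVec v = d1 • v → ∃ c : Fin r → ℝ, v = Vg.mulVec c)
    (B : Matrix (Fin n) (Fin r) ℝ)
    (C : Matrix (Fin r) (Fin r) ℝ) (hC : C.PosDef)
    -- `G` is the Moore–Penrose pseudoinverse of `M := Ã − d₁I` (Penrose conditions)
    (G : Matrix (Fin n) (Fin n) ℝ)
    (hG1 : (Atil - d1 • 1) * G * (Atil - d1 • 1) = Atil - d1 • 1)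
    (hG2 : G * (Atil - d1 • 1) * G = G)
    (hG3 : ((Atil - d1 • 1) * G)ᵀ = (Atil - d1 • 1) * G)
    (hG4 : (G * (Atil - d1 • 1))ᵀ = G * (Atil - d1 • 1))
    (hdeg : Vgᵀ * B * C⁻¹ = 0)
    -- spectral norm bound `‖G(BC⁻¹)‖₂ ≤ 1`
    (hnorm : ((1 : Matrix (Fin r) (Fin r) ℝ) -
      (G * B * C⁻¹)ᵀ * (G * B * C⁻¹)).PosSemidef) :
    ∀ U : Matrix (Fin r) (Fin r) ℝ,
      Uᵀ * U = (1 : Matrix (Fin r) (Fin r) ℝ) -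
          C⁻¹ * Bᵀ * Gᵀ * G * B * C⁻¹ →
      (Vg * U + G * B * C⁻¹)ᵀ * (Vg * U + G * B * C⁻¹) = 1 ∧
        Atil * (Vg * U + G * B * C⁻¹) * C - B =
          (Vg * U + G * B * C⁻¹) * (d1 • C) := by

  intro U hU
  set M : Matrix (Fin n) (Fin n) ℝ := Atil - d1 • 1 with hMdef
  have hMsym : Mᵀ = M := by
    simp [hMdef, transpose_sub, transpose_smul, hAtil.eq]
  have hMVg : M * Vg = 0 := by
    simp [hMdef, Matrix.sub_mul, Matrix.smul_mul, hEig]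
  have hVgM : Vgᵀ * M = 0 := by
    have h := congrArg Matrix.transpose hMVg
    simpa [Matrix.transpose_mul, hMsym] using h
  have hGM : G * M = M * Gᵀ := by
    conv_lhs => rw [← hG4]
    rw [Matrix.transpose_mul, hMsym]
  have hMG : M * G = Gᵀ * M := by
    conv_lhs => rw [← hG3]
    rw [Matrix.transpose_mul, hMsym]
  have hVgG : Vgᵀ * G = 0 := by
    have h : Vgᵀ * G = (Vgᵀ * M) * (Gᵀ * G) := by
      conv_lhs => rw [← hG2]
      rw [hGM]
      simp only [Matrix.mul_assoc]
    rw [h, hVgM, Matrix.zero_mul]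
  have hdet : IsUnit C.det := isUnit_iff_ne_zero.mpr hC.det_pos.ne'
  have hCinv : C⁻¹ * C = 1 := Matrix.nonsing_inv_mul C hdet
  have hCT : Cᵀ = C := by
    have h := hC.1
    ext i j
    simpa using congrFun (congrFun h i) j
  have hCiT : (C⁻¹)ᵀ = C⁻¹ := by
    rw [Matrix.transpose_nonsing_inv, hCT]
  have hVgB : Vgᵀ * B = 0 := by
    have h := congrArg (· * C) hdeg
    simpa [Matrix.mul_assoc, hCinv] using h
  -- kernel projection argument : Gᵀ * M * B = B
  have hMGtM : M * Gᵀ * M = M := by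
    have h := congrArg Matrix.transpose hG1
    simpa [Matrix.transpose_mul, hMsym, Matrix.mul_assoc] using h
  have hMK : M * (B - Gᵀ * M * B) = 0 := by
    rw [Matrix.mul_sub]
    have : M * (Gᵀ * M * B) = M * B := by
      simp only [← Matrix.mul_assoc]
      rw [hMGtM]
    rw [this, sub_self]
  have hVgGtM : Vgᵀ * Gᵀ * M = 0 := by
    have h : M * G * Vg = 0 := by
      rw [hMG, Matrix.mul_assoc, hMVg, Matrix.mul_zero]
    have h2 := congrArg Matrix.transpose h
    simpa [Matrix.transpose_mul, hMsym, Matrix.mul_assoc] using h2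
  have hVgK : Vgᵀ * (B - Gᵀ * M * B) = 0 := by
    rw [Matrix.mul_sub, hVgB]
    have : Vgᵀ * (Gᵀ * M * B) = 0 := by
      simp only [← Matrix.mul_assoc]
      rw [hVgGtM, Matrix.zero_mul]
    rw [this, sub_self]
  have hK : B - Gᵀ * M * B = 0 := by
    ext i j
    set v : Fin n → ℝ := fun k => (B - Gᵀ * M * B) k j with hvdef
    have hMv : M.mulVec v = 0 := by
      ext i'
      have h := congrFun (congrFun hMK i') j
      simpa [Matrix.mulVec, Matrix.mul_apply, dotProduct, hvdef] using h
    have hAv : Atil.mulVec v = d1 • v := by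
      have h : M.mulVec v = Atil.mulVec v - d1 • v := by
        simp [hMdef, Matrix.sub_mulVec, Matrix.smul_mulVec, Matrix.one_mulVec]
      rw [h] at hMv
      exact sub_eq_zero.mp hMv
    obtain ⟨c, hc⟩ := hSpan v hAv
    have hVgv : Vgᵀ.mulVec v = 0 := by
      ext j'
      have h := congrFun (congrFun hVgK j') j
      simpa [Matrix.mulVec, Matrix.mul_apply, dotProduct, hvdef] using h
    have hc0 : c = 0 := by
      have h : Vgᵀ.mulVec v = c := by
        rw [hc, Matrix.mulVec_mulVec, hVg, Matrix.one_mulVec]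
      rw [hVgv] at h
      exact h.symm
    have hv0 : v i = 0 := by
      rw [hc, hc0, Matrix.mulVec_zero]
      rfl
    simpa [hvdef] using hv0
  have hGtMB : Gᵀ * M * B = B := by
    have := sub_eq_zero.mp hK
    exact this.symm
  have hMGB : M * G * B = B := by rw [hMG]; exact hGtMB
  constructor
  · -- orthonormality
    have hVgW : Vgᵀ * (G * B * C⁻¹) = 0 := by
      simp only [← Matrix.mul_assoc, hVgG, Matrix.zero_mul]
    have hWVg : (G * B * C⁻¹)ᵀ * Vg = 0 := by
      have h := congrArg Matrix.transpose hVgW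
      simpa [Matrix.transpose_mul, Matrix.mul_assoc] using h
    have expand : (Vg * U + G * B * C⁻¹)ᵀ * (Vg * U + G * B * C⁻¹)
        = Uᵀ * (Vgᵀ * Vg) * U + Uᵀ * (Vgᵀ * (G * B * C⁻¹))
          + ((G * B * C⁻¹)ᵀ * Vg) * U + (G * B * C⁻¹)ᵀ * (G * B * C⁻¹) := by
      simp only [Matrix.transpose_add, Matrix.transpose_mul, Matrix.add_mul,
        Matrix.mul_add, Matrix.mul_assoc]
      abel
    rw [expand, hVg, hVgW, hWVg, Matrix.mul_zero, Matrix.zero_mul, Matrix.mul_one,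
      add_zero, add_zero, hU]
    have hWW : (G * B * C⁻¹)ᵀ * (G * B * C⁻¹) = C⁻¹ * Bᵀ * Gᵀ * G * B * C⁻¹ := by
      simp only [Matrix.transpose_mul, hCiT, Matrix.mul_assoc]
    rw [hWW, sub_add_cancel]
  · -- first-order condition
    have hMX : M * (Vg * U + G * B * C⁻¹) * C = B := by
      rw [Matrix.mul_add, ← Matrix.mul_assoc M Vg U, hMVg, Matrix.zero_mul, zero_add]
      calc M * (G * B * C⁻¹) * C = (M * G * B) * (C⁻¹ * C) := by
            simp only [Matrix.mul_assoc]
        _ = B := by rw [hMGB, hCinv, Matrix.mul_one]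
    have h : Atil * (Vg * U + G * B * C⁻¹) * C - (Vg * U + G * B * C⁻¹) * (d1 • C)
        = M * (Vg * U + G * B * C⁻¹) * C := by
      simp [hMdef, Matrix.sub_mul, Matrix.mul_smul, Matrix.smul_mul, Matrix.mul_sub,
        Matrix.add_mul, smul_add]
    have h2 : Atil * (Vg * U + G * B * C⁻¹) * C - (Vg * U + G * B * C⁻¹) * (d1 • C) = B := by
      rw [h]; exact hMX
    have h3 := sub_eq_iff_eq_add.mp h2
    rw [h3]
    abel
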